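/- For every word w over {a,b}, |w| ≥ K_w + R_w; moreover, |w| = K_w + R_w if and only if |w| = H_w + L_w. -/

import Mathlib

/-- The two-letter alphabet {a, b}. -/
inductive AB : Type
  | a : AB
  | b : AB
deriving DecidableEq, Repr

/-- A (finite) word over {a, b}. -/
abbrev Word := List AB

open AB

/-- `u` occurs in `w` at position `i`. -/
def OccursAt (u w : Word) (i : ℕ) : Prop :=
  i + u.length ≤ w.length ∧ (w.drop i).take u.length = u

/-- `u` occurs exactly once in `w` (is unrepeated in `w`). -/
def OccursOnce (u w : Word) : Prop := ∃! i, OccursAt u w i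

/-- `u` is a right special factor of `w`: both `ua` and `ub` are factors of `w`. -/
def IsRightSpecial (u w : Word) : Prop := (u ++ [a]) <:+: w ∧ (u ++ [b]) <:+: w

/-- `u` is a left special factor of `w`: both `au` and `bu` are factors of `w`. -/
def IsLeftSpecial (u w : Word) : Prop := ([a] ++ u) <:+: w ∧ ([b] ++ u) <:+: w

/-- `K w`: the length of the shortest unrepeated suffix of `w`. -/
noncomputable def Kp (w : Word) : ℕ := sInf {n | ∃ s : Word, s <:+ w ∧ s.length = n ∧ OccursOnce s w}

/-- `H w`: the length of the shortest unrepeated prefix of `w`. -/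
noncomputable def Hp (w : Word) : ℕ := sInf {n | ∃ p : Word, p <+: w ∧ p.length = n ∧ OccursOnce p w}

/-- `R w`: the smallest `n ≥ 0` such that `w` has no right special factor of length `n`. -/
noncomputable def Rp (w : Word) : ℕ := sInf {n | ∀ u : Word, u.length = n → ¬ IsRightSpecial u w}

/-- `L w`: the smallest `n ≥ 0` such that `w` has no left special factor of length `n`. -/
noncomputable def Lp (w : Word) : ℕ := sInf {n | ∀ u : Word, u.length = n → ¬ IsLeftSpecial u w}

/-- A word `w` is trapezoidal if `|w| = K w + R w`. -/
def IsTrapezoidal (w : Word) : Prop := w.length = Kp w + Rp w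

/-- A finite word over `{a,b}` is Sturmian iff it is balanced: there is no word `u`
with both `aua` and `bub` factors of `w`. -/
def IsSturmian (w : Word) : Prop :=
  ¬ ∃ u : Word, ([a] ++ u ++ [a]) <:+: w ∧ ([b] ++ u ++ [b]) <:+: w

/-- A nonempty word is closed if it has a border (a proper prefix which is also a suffix)
whose only occurrences in `w` are as a prefix and as a suffix. -/
def IsClosedWord (w : Word) : Prop :=
  w ≠ [] ∧ ∃ v : Word, v <+: w ∧ v.length < w.length ∧ v <:+ w ∧
    ∀ i : ℕ, OccursAt v w i → i = 0 ∨ i + v.length = w.length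

/-- A nonempty word is open if it is not closed. -/
def IsOpenWord (w : Word) : Prop := w ≠ [] ∧ ¬ IsClosedWord w

/-- Central words: `a^n`, `b^n`, or `u a b v = v b a u`. -/
def IsCentral (w : Word) : Prop :=
  (∃ n : ℕ, w = List.replicate n a) ∨ (∃ n : ℕ, w = List.replicate n b) ∨
  (∃ u v : Word, w = u ++ [a, b] ++ v ∧ w = v ++ [b, a] ++ u)

/-- The minimal period of `w`: `|w|` minus the length of the longest border of `w`. -/
noncomputable def minPeriod (w : Word) : ℕ :=
  w.length - sSup {n | ∃ v : Word, v.length = n ∧ v <+: w ∧ v ≠ w ∧ v <:+ w}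

section AuxTrapezoidal

private instance (v w : Word) : Decidable (IsRightSpecial v w) := by
  unfold IsRightSpecial; infer_instance

private instance (v w : Word) : Decidable (IsLeftSpecial v w) := by
  unfold IsLeftSpecial; infer_instance

private lemma ab_cases (c : AB) : c = AB.a ∨ c = AB.b := by cases c <;> simp

/-! ### Occurrences -/

private lemma occursAt_infix {u w : Word} {i : ℕ} (h : OccursAt u w i) : u <:+: w := by
  obtain ⟨_, ht⟩ := h
  have h1 : (w.drop i).take u.length <+: w.drop i := List.take_prefix _ _
  rw [ht] at h1
  exact h1.isInfix.trans (List.drop_suffix i w).isInfix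

private lemma exists_occursAt_of_infix {u w : Word} (h : u <:+: w) : ∃ i, OccursAt u w i := by
  obtain ⟨s, t, rfl⟩ := h
  refine ⟨s.length, ?_, ?_⟩
  · simp [List.length_append]
  · rw [List.append_assoc, List.drop_left, List.take_left]

private lemma occursAt_take {u w : Word} {i m : ℕ} (h : OccursAt u w i) (hm : m ≤ u.length) :
    OccursAt (u.take m) w i := by
  obtain ⟨hb, ht⟩ := h
  have hlen : (u.take m).length = m := by simp [List.length_take]; omega
  constructor
  · omega
  · rw [hlen]
    conv_rhs => rw [← ht, List.take_take, min_eq_left hm]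

private lemma occursAt_drop {u w : Word} {i m : ℕ} (h : OccursAt u w i) (hm : m ≤ u.length) :
    OccursAt (u.drop m) w (i + m) := by
  obtain ⟨hb, ht⟩ := h
  have hlen : (u.drop m).length = u.length - m := List.length_drop
  constructor
  · omega
  · rw [hlen]
    have hdd : w.drop (i + m) = (w.drop i).drop m := by rw [List.drop_drop, Nat.add_comm]
    rw [hdd]
    conv_rhs => rw [← ht, List.drop_take]

private lemma suffix_eq_drop {s w : Word} (h : s <:+ w) : s = w.drop (w.length - s.length) := by
  obtain ⟨t, rfl⟩ := h
  rw [List.length_append]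
  have h2 : t.length + s.length - s.length = t.length := by omega
  rw [h2, List.drop_left]

private lemma occursAt_suffix (w : Word) {n : ℕ} (hn : n ≤ w.length) :
    OccursAt (w.drop (w.length - n)) w (w.length - n) := by
  have hlen : (w.drop (w.length - n)).length = n := by rw [List.length_drop]; omega
  constructor
  · omega
  · rw [hlen]
    exact List.take_of_length_le (by omega)

private lemma occursOnce_self (w : Word) : OccursOnce w w := by
  refine ⟨0, ⟨by simp, by simp⟩, ?_⟩
  intro j hj
  obtain ⟨hb, _⟩ := hj
  omega

/-! ### The `K` function -/

private lemma Kp_eq (w : Word) :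
    Kp w = sInf {n | ∃ s : Word, s <:+ w ∧ s.length = n ∧ OccursOnce s w} := rfl

private lemma KSet_nonempty (w : Word) :
    {n | ∃ s : Word, s <:+ w ∧ s.length = n ∧ OccursOnce s w}.Nonempty :=
  ⟨w.length, w, List.suffix_refl w, rfl, occursOnce_self w⟩

private lemma K_le (w : Word) : Kp w ≤ w.length :=
  Nat.sInf_le ⟨w, List.suffix_refl w, rfl, occursOnce_self w⟩

private lemma mem_KSet_iff {w : Word} {n : ℕ} (hn : n ≤ w.length) :
    (n ∈ {n | ∃ s : Word, s <:+ w ∧ s.length = n ∧ OccursOnce s w}) ↔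
      OccursOnce (w.drop (w.length - n)) w := by
  constructor
  · rintro ⟨s, hs, rfl, ho⟩
    rwa [← suffix_eq_drop hs]
  · intro h
    exact ⟨_, List.drop_suffix _ _, by rw [List.length_drop]; omega, h⟩

private lemma suffix_once_of_le {w : Word} {n : ℕ} (hK : Kp w ≤ n) (hn : n ≤ w.length) :
    OccursOnce (w.drop (w.length - n)) w := by
  induction n, hK using Nat.le_induction with
  | base =>
    exact (mem_KSet_iff (K_le w)).mp (Nat.sInf_mem (KSet_nonempty w))
  | succ n hKn ih =>
    have ihh := ih (by omega)
    obtain ⟨i0, hi0, huniq⟩ := ihh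
    have hdd : (w.drop (w.length - (n+1))).drop 1 = w.drop (w.length - n) := by
      rw [List.drop_drop]
      congr 1
      omega
    refine ⟨w.length - (n+1), occursAt_suffix w hn, ?_⟩
    intro j hj
    have hjlen : (w.drop (w.length - (n+1))).length = n + 1 := by
      rw [List.length_drop]; omega
    have h1 : OccursAt ((w.drop (w.length - (n+1))).drop 1) w (j + 1) :=
      occursAt_drop hj (by omega)
    rw [hdd] at h1
    have e1 := huniq _ h1
    have e2 := huniq _ (occursAt_suffix w (by omega : n ≤ w.length))
    omega

private lemma not_once_of_lt_K {w : Word} {n : ℕ} (hn : n < Kp w) (hN : n ≤ w.length) :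
    ¬ OccursOnce (w.drop (w.length - n)) w :=
  fun h => Nat.notMem_of_lt_sInf hn ((mem_KSet_iff hN).mpr h)

/-! ### Factor finsets -/

private def Fct (w : Word) (n : ℕ) : Finset Word :=
  (Finset.range (w.length + 1 - n)).image (fun i => (w.drop i).take n)

private lemma mem_Fct_iff {w u : Word} {n : ℕ} : u ∈ Fct w n ↔ u <:+: w ∧ u.length = n := by
  simp only [Fct, Finset.mem_image, Finset.mem_range]
  constructor
  · rintro ⟨i, hi, rfl⟩
    have hin : i + n ≤ w.length := by omega
    constructor
    · exact ((List.take_prefix _ _).isInfix).trans (List.drop_suffix i w).isInfix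
    · rw [List.length_take, List.length_drop]; omega
  · rintro ⟨⟨s, t, rfl⟩, hlen⟩
    refine ⟨s.length, ?_, ?_⟩
    · simp only [List.length_append]; omega
    · rw [List.append_assoc, List.drop_left, ← hlen, List.take_left]

private lemma occursAt_ext {v w : Word} {i : ℕ} (h : OccursAt v w i)
    (hlt : i + v.length < w.length) :
    ∃ c : AB, (v ++ [c]) <:+: w := by
  obtain ⟨hb, ht⟩ := h
  have hlen : v.length < (w.drop i).length := by rw [List.length_drop]; omega
  refine ⟨(w.drop i)[v.length], ?_⟩
  have h2 : (w.drop i).take (v.length + 1) = v ++ [(w.drop i)[v.length]] := by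
    rw [← List.take_concat_get' _ _ hlen, ht]
  have h3 : (w.drop i).take (v.length + 1) <:+: w :=
    ((List.take_prefix _ _).isInfix).trans (List.drop_suffix i w).isInfix
  rwa [h2] at h3

/-! ### The zero-extension set `Zs` -/

private def Zs (w : Word) (n : ℕ) : Finset Word :=
  (Fct w n).filter (fun v => ¬ (v ++ [AB.a]) <:+: w ∧ ¬ (v ++ [AB.b]) <:+: w)

private lemma mem_Zs_occ {w : Word} {n : ℕ} {v : Word} (hv : v ∈ Zs w n) :
    ∀ i, OccursAt v w i → i + v.length = w.length := by
  intro i hi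
  rcases Nat.lt_or_ge (i + v.length) w.length with hlt | hge
  · obtain ⟨c, hc⟩ := occursAt_ext hi hlt
    obtain ⟨hmem, hna, hnb⟩ := Finset.mem_filter.mp hv
    rcases ab_cases c with rfl | rfl
    · exact absurd hc hna
    · exact absurd hc hnb
  · obtain ⟨hb, _⟩ := hi
    omega

private lemma Zs_card {w : Word} {n : ℕ} (hn : n ≤ w.length) :
    (Zs w n).card = if Kp w ≤ n then 1 else 0 := by
  have key : ∀ v ∈ Zs w n, v = w.drop (w.length - n) ∧ OccursOnce v w := by
    intro v hv
    have hmem := (Finset.mem_filter.mp hv).1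
    have hlen : v.length = n := (mem_Fct_iff.mp hmem).2
    obtain ⟨i, hocc⟩ := exists_occursAt_of_infix (mem_Fct_iff.mp hmem).1
    have hi : i + v.length = w.length := mem_Zs_occ hv i hocc
    have hv_eq : v = w.drop (w.length - n) := by
      obtain ⟨hb, ht⟩ := hocc
      have hieq : i = w.length - n := by omega
      have hdl : (w.drop (w.length - n)).length ≤ n := by rw [List.length_drop]; omega
      rw [← ht, hlen, hieq, List.take_of_length_le hdl]
    refine ⟨hv_eq, ⟨w.length - n, ?_, ?_⟩⟩
    · rw [hv_eq]; exact occursAt_suffix w hn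
    · intro j hj
      have := mem_Zs_occ hv j hj
      omega
  rcases le_or_gt (Kp w) n with hK | hK
  · rw [if_pos hK]
    have honce := suffix_once_of_le hK hn
    have hdmem : w.drop (w.length - n) ∈ Zs w n := by
      have hdlen : (w.drop (w.length - n)).length = n := by rw [List.length_drop]; omega
      have hnoc : ∀ c : AB, ¬ (w.drop (w.length - n) ++ [c]) <:+: w := by
        intro c hc
        obtain ⟨j, hj⟩ := exists_occursAt_of_infix hc
        have hjb : j + (w.drop (w.length - n) ++ [c]).length ≤ w.length := hj.1
        have hjlen : (w.drop (w.length - n) ++ [c]).length = n + 1 := by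
          rw [List.length_append, List.length_singleton, hdlen]
        have h1 : OccursAt ((w.drop (w.length - n) ++ [c]).take n) w j :=
          occursAt_take hj (by omega)
        have h2 : (w.drop (w.length - n) ++ [c]).take n = w.drop (w.length - n) :=
          List.take_left' hdlen
        rw [h2] at h1
        obtain ⟨i0, hi0, huniq⟩ := honce
        have e1 := huniq _ h1
        have e2 := huniq _ (occursAt_suffix w hn)
        omega
      exact Finset.mem_filter.mpr
        ⟨mem_Fct_iff.mpr ⟨(List.drop_suffix _ _).isInfix, hdlen⟩, hnoc AB.a, hnoc AB.b⟩
    have : Zs w n = {w.drop (w.length - n)} :=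
      Finset.eq_singleton_iff_unique_mem.mpr ⟨hdmem, fun v hv => (key v hv).1⟩
    rw [this, Finset.card_singleton]
  · rw [if_neg (by omega)]
    rw [Finset.card_eq_zero, Finset.eq_empty_iff_forall_notMem]
    intro v hv
    obtain ⟨hveq, honce⟩ := key v hv
    rw [hveq] at honce
    exact not_once_of_lt_K hK hn honce

/-! ### Right special finsets and the counting identity -/

private def RSf (w : Word) (n : ℕ) : Finset Word :=
  (Fct w n).filter (fun v => IsRightSpecial v w)

private lemma counting_identity (w : Word) (n : ℕ) :
    (Fct w (n+1)).card + (Zs w n).card = (Fct w n).card + (RSf w n).card := by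
  have hmap : ∀ u ∈ Fct w (n+1), u.take n ∈ Fct w n := by
    intro u hu
    obtain ⟨hinf, hlen⟩ := mem_Fct_iff.mp hu
    refine mem_Fct_iff.mpr ⟨(List.take_prefix _ _).isInfix.trans hinf, ?_⟩
    rw [List.length_take]; omega
  rw [Finset.card_eq_sum_card_fiberwise hmap]
  have hfib : ∀ v ∈ Fct w n,
      (Finset.filter (fun u => u.take n = v) (Fct w (n+1))).card
        + (if (¬ (v ++ [AB.a]) <:+: w ∧ ¬ (v ++ [AB.b]) <:+: w) then 1 else 0)
      = 1 + (if IsRightSpecial v w then 1 else 0) := by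
    intro v hv
    have hvlen : v.length = n := (mem_Fct_iff.mp hv).2
    have hset : Finset.filter (fun u => u.take n = v) (Fct w (n+1))
        = Finset.filter (fun u => u <:+: w) ({v ++ [AB.a], v ++ [AB.b]} : Finset Word) := by
      ext u
      simp only [Finset.mem_filter, mem_Fct_iff, Finset.mem_insert, Finset.mem_singleton]
      constructor
      · rintro ⟨⟨hinf, hlen⟩, htake⟩
        have hn' : n < u.length := by omega
        have h1 : u.take n ++ [u[n]'hn'] = u.take (n+1) := List.take_concat_get' u n hn'
        rw [htake] at h1
        have h2 : u.take (n+1) = u := by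
          rw [show n + 1 = u.length from hlen.symm]
          exact List.take_length
        rw [h2] at h1
        rcases ab_cases (u[n]'hn') with hc | hc <;> rw [hc] at h1
        · exact ⟨Or.inl h1.symm, hinf⟩
        · exact ⟨Or.inr h1.symm, hinf⟩
      · rintro ⟨hor, hinf⟩
        rcases hor with rfl | rfl <;>
          exact ⟨⟨hinf, by simp [hvlen]⟩, by rw [← hvlen]; exact List.take_left⟩
    rw [hset]
    have hne : v ++ [AB.a] ≠ v ++ [AB.b] := by simp
    by_cases hA : (v ++ [AB.a]) <:+: w <;> by_cases hB : (v ++ [AB.b]) <:+: w <;>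
      simp [Finset.filter_insert, Finset.filter_singleton, hA, hB, IsRightSpecial, hne]
  have hZ : (Zs w n).card
      = ∑ v ∈ Fct w n, (if (¬ (v ++ [AB.a]) <:+: w ∧ ¬ (v ++ [AB.b]) <:+: w) then 1 else 0) :=
    Finset.card_filter _ _
  have hR : (RSf w n).card = ∑ v ∈ Fct w n, (if IsRightSpecial v w then 1 else 0) :=
    Finset.card_filter _ _
  have hc : (Fct w n).card = ∑ _v ∈ Fct w n, 1 := by simp
  rw [hZ, hR]
  conv_rhs => rw [hc]
  rw [← Finset.sum_add_distrib, ← Finset.sum_add_distrib]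
  exact Finset.sum_congr rfl hfib

/-! ### Telescoping -/

private lemma Fct_zero_card (w : Word) : (Fct w 0).card = 1 := by
  have : Fct w 0 = {([] : Word)} := by
    ext u
    simp only [mem_Fct_iff, Finset.mem_singleton, List.length_eq_zero_iff]
    constructor
    · rintro ⟨_, rfl⟩; rfl
    · rintro rfl; exact ⟨List.nil_infix, rfl⟩
  rw [this, Finset.card_singleton]

private lemma Fct_top_card (w : Word) : (Fct w (w.length + 1)).card = 0 := by
  rw [Finset.card_eq_zero, Finset.eq_empty_iff_forall_notMem]
  intro u hu
  obtain ⟨hinf, hlen⟩ := mem_Fct_iff.mp hu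
  have := hinf.length_le
  omega

private lemma sum_RSf (w : Word) :
    ∑ n ∈ Finset.range (w.length + 1), (RSf w n).card = w.length - Kp w := by
  have hsum : ∑ n ∈ Finset.range (w.length + 1), ((Fct w (n+1)).card + (Zs w n).card)
      = ∑ n ∈ Finset.range (w.length + 1), ((Fct w n).card + (RSf w n).card) :=
    Finset.sum_congr rfl (fun n _ => counting_identity w n)
  rw [Finset.sum_add_distrib, Finset.sum_add_distrib] at hsum
  have e1 : ∑ n ∈ Finset.range (w.length + 2), (Fct w n).card
      = (∑ n ∈ Finset.range (w.length + 1), (Fct w (n+1)).card) + (Fct w 0).card :=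
    Finset.sum_range_succ' _ _
  have e2 : ∑ n ∈ Finset.range (w.length + 2), (Fct w n).card
      = (∑ n ∈ Finset.range (w.length + 1), (Fct w n).card) + (Fct w (w.length+1)).card :=
    Finset.sum_range_succ _ _
  have hZ : ∑ n ∈ Finset.range (w.length + 1), (Zs w n).card = w.length + 1 - Kp w := by
    have hcongr : ∑ n ∈ Finset.range (w.length + 1), (Zs w n).card
        = ∑ n ∈ Finset.range (w.length + 1), (if Kp w ≤ n then 1 else 0) :=
      Finset.sum_congr rfl (fun n hn => Zs_card (by
        have := Finset.mem_range.mp hn; omega))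
    rw [hcongr, ← Finset.card_filter]
    have : Finset.filter (fun n => Kp w ≤ n) (Finset.range (w.length + 1))
        = Finset.Ico (Kp w) (w.length + 1) := by
      ext m
      simp only [Finset.mem_filter, Finset.mem_range, Finset.mem_Ico]
      omega
    rw [this, Nat.card_Ico]
  have hK := K_le w
  have hF0 := Fct_zero_card w
  have hFt := Fct_top_card w
  omega

/-! ### The `R` function -/

private lemma R_mem_top (w : Word) :
    w.length ∈ {n | ∀ u : Word, u.length = n → ¬ IsRightSpecial u w} := by
  intro u hu hrs
  have := hrs.1.length_le
  rw [List.length_append, List.length_singleton] at this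
  omega

private lemma R_le (w : Word) : Rp w ≤ w.length := Nat.sInf_le (R_mem_top w)

private lemma RSet_upward {w : Word} {n : ℕ}
    (h : n ∈ {n | ∀ u : Word, u.length = n → ¬ IsRightSpecial u w}) :
    n + 1 ∈ {n | ∀ u : Word, u.length = n → ¬ IsRightSpecial u w} := by
  intro u hu hrs
  apply h (u.drop 1) (by rw [List.length_drop, hu]; omega)
  have hsfx : ∀ c : AB, (u.drop 1) ++ [c] <:+ u ++ [c] := by
    intro c
    obtain ⟨r, hr⟩ := List.drop_suffix 1 u
    exact ⟨r, by rw [← List.append_assoc, hr]⟩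
  exact ⟨(hsfx AB.a).isInfix.trans hrs.1, (hsfx AB.b).isInfix.trans hrs.2⟩

private lemma mem_RSet_of_le {w : Word} {n : ℕ} (h : Rp w ≤ n) :
    n ∈ {n | ∀ u : Word, u.length = n → ¬ IsRightSpecial u w} := by
  induction n, h using Nat.le_induction with
  | base => exact Nat.sInf_mem ⟨w.length, R_mem_top w⟩
  | succ n _ ih => exact RSet_upward ih

private lemma RSf_eq_empty {w : Word} {n : ℕ} (h : Rp w ≤ n) : RSf w n = ∅ := by
  rw [Finset.eq_empty_iff_forall_notMem]
  intro v hv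
  obtain ⟨hmem, hrs⟩ := Finset.mem_filter.mp hv
  exact mem_RSet_of_le h v (mem_Fct_iff.mp hmem).2 hrs

private lemma one_le_RSf {w : Word} {n : ℕ} (h : n < Rp w) : 1 ≤ (RSf w n).card := by
  have hn := Nat.notMem_of_lt_sInf h
  simp only [Set.mem_setOf_eq] at hn
  push_neg at hn
  obtain ⟨u, hu, hrs⟩ := hn
  have : u ∈ RSf w n := Finset.mem_filter.mpr
    ⟨mem_Fct_iff.mpr ⟨(List.prefix_append u [AB.a]).isInfix.trans hrs.1, hu⟩, hrs⟩
  exact Finset.card_pos.mpr ⟨u, this⟩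

private lemma sum_RSf_eq (w : Word) :
    ∑ n ∈ Finset.range (w.length + 1), (RSf w n).card
      = ∑ n ∈ Finset.range (Rp w), (RSf w n).card := by
  refine (Finset.sum_subset (Finset.range_subset_range.mpr (by have := R_le w; omega)) ?_).symm
  intro x _ hx
  rw [RSf_eq_empty (by simpa using hx), Finset.card_empty]

private lemma part1 (w : Word) : Kp w + Rp w ≤ w.length := by
  have h1 : Rp w ≤ ∑ n ∈ Finset.range (Rp w), (RSf w n).card := by
    calc Rp w = ∑ _n ∈ Finset.range (Rp w), 1 := by simp
    _ ≤ _ := Finset.sum_le_sum (fun n hn => one_le_RSf (Finset.mem_range.mp hn))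
  have h2 := sum_RSf w
  have h3 := sum_RSf_eq w
  have h4 := K_le w
  omega

/-! ### Characterization of equality -/

private def HasRSPair (w : Word) : Prop :=
  ∃ u v : Word, u.length = v.length ∧ u ≠ v ∧ IsRightSpecial u w ∧ IsRightSpecial v w

private def HasLSPair (w : Word) : Prop :=
  ∃ u v : Word, u.length = v.length ∧ u ≠ v ∧ IsLeftSpecial u w ∧ IsLeftSpecial v w

private lemma sum_ones {s : Finset ℕ} {f : ℕ → ℕ} (h1 : ∀ x ∈ s, 1 ≤ f x)
    (h2 : ∑ x ∈ s, f x = s.card) : ∀ x ∈ s, f x = 1 := by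
  by_contra hc
  push_neg at hc
  obtain ⟨x, hx, hfx⟩ := hc
  have h2' : 2 ≤ f x := by have := h1 x hx; omega
  have hsplit := Finset.add_sum_erase s f hx
  have hrest : (s.erase x).card ≤ ∑ y ∈ s.erase x, f y := by
    calc (s.erase x).card = ∑ _y ∈ s.erase x, 1 := by simp
    _ ≤ _ := Finset.sum_le_sum (fun y hy => h1 y (Finset.mem_of_mem_erase hy))
  have hcard : (s.erase x).card = s.card - 1 := Finset.card_erase_of_mem hx
  have hpos : 1 ≤ s.card := Finset.card_pos.mpr ⟨x, hx⟩
  omega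

private lemma trap_iff (w : Word) : w.length = Kp w + Rp w ↔ ¬ HasRSPair w := by
  constructor
  · intro heq hpair
    obtain ⟨u, v, hlen, hne, hu, hv⟩ := hpair
    have hum : u ∈ RSf w u.length := Finset.mem_filter.mpr
      ⟨mem_Fct_iff.mpr ⟨(List.prefix_append u [AB.a]).isInfix.trans hu.1, rfl⟩, hu⟩
    have hvm : v ∈ RSf w u.length := Finset.mem_filter.mpr
      ⟨mem_Fct_iff.mpr ⟨(List.prefix_append v [AB.a]).isInfix.trans hv.1, hlen.symm⟩, hv⟩
    have h2 : 1 < (RSf w u.length).card := Finset.one_lt_card.mpr ⟨u, hum, v, hvm, hne⟩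
    have hm : u.length < Rp w := by
      by_contra h
      push_neg at h
      rw [RSf_eq_empty h] at h2
      simp at h2
    have hall : ∀ x ∈ Finset.range (Rp w), (RSf w x).card = 1 := by
      refine sum_ones (fun n hn => one_le_RSf (Finset.mem_range.mp hn)) ?_
      rw [← sum_RSf_eq w, sum_RSf w, Finset.card_range]
      have := K_le w
      omega
    have := hall u.length (Finset.mem_range.mpr hm)
    omega
  · intro hno
    have hcard : ∀ n, (RSf w n).card ≤ 1 := by
      intro n
      by_contra h
      push_neg at h
      obtain ⟨x, hx, y, hy, hxy⟩ := Finset.one_lt_card.mp h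
      obtain ⟨hxm, hxs⟩ := Finset.mem_filter.mp hx
      obtain ⟨hym, hys⟩ := Finset.mem_filter.mp hy
      exact hno ⟨x, y, by rw [(mem_Fct_iff.mp hxm).2, (mem_Fct_iff.mp hym).2], hxy, hxs, hys⟩
    have hle : ∑ n ∈ Finset.range (Rp w), (RSf w n).card ≤ Rp w := by
      calc ∑ n ∈ Finset.range (Rp w), (RSf w n).card
          ≤ ∑ _n ∈ Finset.range (Rp w), 1 := Finset.sum_le_sum (fun n _ => hcard n)
      _ = Rp w := by simp
    have h2 := sum_RSf w
    have h3 := sum_RSf_eq w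
    have h4 := K_le w
    have h5 := part1 w
    omega

/-! ### Two left special factors give two right special factors -/

private lemma hasLS_to_hasRS {w : Word} (h : HasLSPair w) : HasRSPair w := by
  have hne : {n | ∃ u v : Word, u.length = n ∧ v.length = n ∧ u ≠ v ∧
      IsLeftSpecial u w ∧ IsLeftSpecial v w}.Nonempty := by
    obtain ⟨u, v, hlen, hne, hu, hv⟩ := h
    exact ⟨u.length, u, v, rfl, hlen.symm, hne, hu, hv⟩
  set S := {n | ∃ u v : Word, u.length = n ∧ v.length = n ∧ u ≠ v ∧
      IsLeftSpecial u w ∧ IsLeftSpecial v w} with hSdef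
  obtain ⟨u, v, hul, hvl, huv, hLu, hLv⟩ := Nat.sInf_mem hne
  have hn0 : sInf S ≠ 0 := by
    intro h0
    apply huv
    rw [h0] at hul hvl
    rw [List.length_eq_zero_iff.mp hul, List.length_eq_zero_iff.mp hvl]
  obtain ⟨m, hm⟩ := Nat.exists_eq_succ_of_ne_zero hn0
  have hpre : ∀ x : Word, IsLeftSpecial x w → IsLeftSpecial (x.take m) w := by
    intro x hx
    have hp : ∀ c : AB, ([c] ++ x.take m) <+: ([c] ++ x) := by
      intro c
      obtain ⟨t, ht⟩ := List.take_prefix m x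
      exact ⟨t, by rw [List.append_assoc, ht]⟩
    exact ⟨(hp AB.a).isInfix.trans hx.1, (hp AB.b).isInfix.trans hx.2⟩
  have htk : u.take m = v.take m := by
    by_contra hne2
    have hmem : m ∈ S := ⟨u.take m, v.take m,
      by rw [List.length_take]; omega, by rw [List.length_take]; omega,
      hne2, hpre u hLu, hpre v hLv⟩
    have := Nat.sInf_le hmem
    omega
  have hmu : m < u.length := by omega
  have hmv : m < v.length := by omega
  have hu_eq : u.take m ++ [u[m]'hmu] = u := by
    rw [List.take_concat_get' u m hmu, show m + 1 = u.length by omega]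
    exact List.take_length
  have hv_eq : v.take m ++ [v[m]'hmv] = v := by
    rw [List.take_concat_get' v m hmv, show m + 1 = v.length by omega]
    exact List.take_length
  have hxy : u[m]'hmu ≠ v[m]'hmv := by
    intro hEq
    apply huv
    rw [← hu_eq, ← hv_eq, htk, hEq]
  have key : ∀ c : AB, (([c] ++ u) <:+: w) → (([c] ++ v) <:+: w) →
      IsRightSpecial ([c] ++ u.take m) w := by
    intro c hcu hcv
    have h1 : ([c] ++ u.take m) ++ [u[m]'hmu] <:+: w := by
      rw [List.append_assoc, hu_eq]; exact hcu
    have h2 : ([c] ++ u.take m) ++ [v[m]'hmv] <:+: w := by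
      rw [List.append_assoc, htk, hv_eq]; exact hcv
    rcases ab_cases (u[m]'hmu) with hx | hx <;> rcases ab_cases (v[m]'hmv) with hy | hy
    · exact absurd (hx.trans hy.symm) hxy
    · rw [hx] at h1; rw [hy] at h2; exact ⟨h1, h2⟩
    · rw [hx] at h1; rw [hy] at h2; exact ⟨h2, h1⟩
    · exact absurd (hx.trans hy.symm) hxy
  exact ⟨[AB.a] ++ u.take m, [AB.b] ++ u.take m, by simp, by simp,
    key AB.a hLu.1 hLv.1, key AB.b hLu.2 hLv.2⟩

/-! ### Reversal -/

private lemma LS_of_RS_rev {u w : Word} (h : IsRightSpecial u w) :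
    IsLeftSpecial u.reverse w.reverse := by
  obtain ⟨ha, hb⟩ := h
  constructor
  · rw [show [AB.a] ++ u.reverse = (u ++ [AB.a]).reverse by simp]
    exact List.reverse_infix.mpr ha
  · rw [show [AB.b] ++ u.reverse = (u ++ [AB.b]).reverse by simp]
    exact List.reverse_infix.mpr hb

private lemma RS_of_LS_rev {u w : Word} (h : IsLeftSpecial u w) :
    IsRightSpecial u.reverse w.reverse := by
  obtain ⟨ha, hb⟩ := h
  constructor
  · rw [show u.reverse ++ [AB.a] = ([AB.a] ++ u).reverse by simp]
    exact List.reverse_infix.mpr ha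
  · rw [show u.reverse ++ [AB.b] = ([AB.b] ++ u).reverse by simp]
    exact List.reverse_infix.mpr hb

private lemma hasRS_rev_iff {w : Word} : HasRSPair w.reverse ↔ HasLSPair w := by
  constructor
  · rintro ⟨u, v, hlen, hne, hu, hv⟩
    have hu' := LS_of_RS_rev hu
    have hv' := LS_of_RS_rev hv
    rw [List.reverse_reverse] at hu' hv'
    refine ⟨u.reverse, v.reverse, by simp [hlen], ?_, hu', hv'⟩
    intro hE
    exact hne (List.reverse_injective hE)
  · rintro ⟨u, v, hlen, hne, hu, hv⟩
    refine ⟨u.reverse, v.reverse, by simp [hlen], ?_, RS_of_LS_rev hu, RS_of_LS_rev hv⟩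
    intro hE
    exact hne (List.reverse_injective hE)

private lemma pair_iff (w : Word) : HasRSPair w ↔ HasLSPair w := by
  constructor
  · intro h
    have h2 := hasRS_rev_iff (w := w.reverse)
    rw [List.reverse_reverse] at h2
    exact hasRS_rev_iff.mp (hasLS_to_hasRS (h2.mp h))
  · exact hasLS_to_hasRS

private lemma occursAt_rev {u w : Word} {i : ℕ} (h : OccursAt u w i) :
    OccursAt u.reverse w.reverse (w.length - u.length - i) := by
  obtain ⟨hb, ht⟩ := h
  constructor
  · rw [List.length_reverse, List.length_reverse]; omega
  · rw [List.length_reverse]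
    have h1 : w.reverse.drop (w.length - u.length - i) = (w.take (i + u.length)).reverse := by
      rw [List.reverse_take]
      congr 1
      omega
    rw [h1]
    have h2 : (w.take (i + u.length)).reverse.take u.length
        = ((w.take (i + u.length)).drop i).reverse := by
      rw [List.reverse_drop]
      congr 1
      rw [List.length_take]
      omega
    rw [h2, List.drop_take]
    congr 1
    rw [show i + u.length - i = u.length by omega]
    exact ht

private lemma occursOnce_rev {u w : Word} (h : OccursOnce u w) :
    OccursOnce u.reverse w.reverse := by
  obtain ⟨i, hi, huniq⟩ := h
  have hib : i + u.length ≤ w.length := hi.1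
  refine ⟨w.length - u.length - i, occursAt_rev hi, ?_⟩
  intro j hj
  have hjb : j + u.length ≤ w.length := by
    have := hj.1
    rw [List.length_reverse, List.length_reverse] at this
    exact this
  have h2 := occursAt_rev hj
  rw [List.reverse_reverse, List.reverse_reverse, List.length_reverse,
    List.length_reverse] at h2
  have := huniq _ h2
  omega

private lemma K_rev (w : Word) : Kp w.reverse = Hp w := by
  unfold Kp Hp
  congr 1
  ext n
  simp only [Set.mem_setOf_eq]
  constructor
  · rintro ⟨s, hs, hl, ho⟩
    refine ⟨s.reverse, ?_, by simp [hl], ?_⟩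
    · have h2 := List.reverse_suffix (l₁ := s.reverse) (l₂ := w)
      rw [List.reverse_reverse] at h2
      exact h2.mp hs
    · have h3 := occursOnce_rev ho
      rwa [List.reverse_reverse] at h3
  · rintro ⟨p, hp, hl, ho⟩
    exact ⟨p.reverse, List.reverse_suffix.mpr hp, by simp [hl], occursOnce_rev ho⟩

private lemma R_rev (w : Word) : Rp w.reverse = Lp w := by
  unfold Rp Lp
  congr 1
  ext n
  simp only [Set.mem_setOf_eq]
  constructor
  · intro h u hu hLS
    exact h u.reverse (by simp [hu]) (RS_of_LS_rev hLS)
  · intro h u hu hRS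
    have h2 := LS_of_RS_rev hRS
    rw [List.reverse_reverse] at h2
    exact h u.reverse (by simp [hu]) h2

end AuxTrapezoidal


/-- `|w| ≥ K w + R w` always, and `|w| = K w + R w ↔ |w| = H w + L w`. -/
theorem length_ge_K_add_R_and_trapezoidal_iff (w : Word) :
    Kp w + Rp w ≤ w.length ∧ (w.length = Kp w + Rp w ↔ w.length = Hp w + Lp w) := by
  refine ⟨part1 w, ?_⟩
  rw [trap_iff w, pair_iff w]
  have h1 := trap_iff w.reverse
  rw [hasRS_rev_iff, List.length_reverse, K_rev, R_rev] at h1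
  exact h1.symm
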